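/- arXiv:2311.16729 — 4 statements merged into one kernel-verified Lean document; each statement's English description precedes it below -/
import Mathlib

section
/- Let V be a real inner product space of dimension 3, let A : V → V be a self-adjoint (symmetric) linear map with trace zero, and let w ∈ V satisfy ‖w‖² = 2. Writing ‖A‖² := tr(A∘A) for the squared Frobenius norm of A and A(w)^⊥ := A w − (⟨A w, w⟩/2)·w for the component of A w orthogonal to w, one has ‖A‖² − ‖A(w)^⊥‖² ≥ (3/8)·⟨A w, w⟩². (This is the pointwise linear-algebra content of LeBrun's Lemma applied to W₊ acting on Λ⁺ with w = ω.) -/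
open scoped RealInnerProductSpace

set_option maxHeartbeats 400000 in
/-- Pointwise linear-algebra content of LeBrun's Lemma: for a trace-free self-adjoint
endomorphism `A` of a 3-dimensional real inner product space and `w` with `‖w‖² = 2`,
one has `‖A‖² − ‖A(w)^⊥‖² ≥ (3/8)⟨A w, w⟩²`, where `‖A‖² = tr(A∘A)` and
`A(w)^⊥ = A w − (⟪A w, w⟫/2)·w`. -/
theorem lebrun_lemma_pointwise
    {V : Type*} [NormedAddCommGroup V] [InnerProductSpace ℝ V]
    [FiniteDimensional ℝ V] (hdim : Module.finrank ℝ V = 3)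
    (A : V →ₗ[ℝ] V) (hA : ∀ x y : V, ⟪A x, y⟫ = ⟪x, A y⟫)
    (htr : LinearMap.trace ℝ V A = 0)
    (w : V) (hw : ‖w‖ ^ 2 = 2) :
    LinearMap.trace ℝ V (A ∘ₗ A) - ‖A w - (⟪A w, w⟫ / 2) • w‖ ^ 2 ≥
      (3 / 8) * ⟪A w, w⟫ ^ 2 := by
  have hwne : w ≠ 0 := by
    intro h; rw [h] at hw; simp at hw
  have hnorm : ‖w‖ = Real.sqrt 2 := by
    rw [← hw, Real.sqrt_sq (norm_nonneg w)]
  set e : V := ‖w‖⁻¹ • w with he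
  have hene : ‖e‖ = 1 := norm_smul_inv_norm hwne
  have horth : Orthonormal ℝ (({0} : Set (Fin 3)).restrict (fun _ => e)) := by
    rw [orthonormal_iff_ite]
    intro i j
    have : i = j := Subsingleton.elim i j
    simp [this, real_inner_self_eq_norm_sq, hene]
    exact Or.inl hene
  obtain ⟨b, hb⟩ := horth.exists_orthonormalBasis_extension_of_card_eq (by simp [hdim])
  have hb0 : b 0 = e := hb 0 rfl
  have hwb : w = Real.sqrt 2 • b 0 := by
    rw [hb0, he, smul_smul, ← hnorm]
    rw [mul_inv_cancel₀ (norm_ne_zero_iff.mpr hwne), one_smul]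
  -- trace via orthonormal basis
  have htr_b : ∀ (T : V →ₗ[ℝ] V), LinearMap.trace ℝ V T = ∑ i, ⟪b i, T (b i)⟫ := by
    intro T
    rw [LinearMap.trace_eq_matrix_trace ℝ b.toBasis, Matrix.trace]
    refine Finset.sum_congr rfl fun i _ => ?_
    rw [Matrix.diag_apply, LinearMap.toMatrix_apply, b.coe_toBasis,
      b.coe_toBasis_repr_apply, b.repr_apply_apply]
  -- Parseval
  have hpar : ∀ x : V, ‖x‖ ^ 2 = ∑ i, ⟪b i, x⟫ ^ 2 := by
    intro x
    have h := b.sum_inner_mul_inner x x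
    rw [← real_inner_self_eq_norm_sq, ← h]
    refine Finset.sum_congr rfl fun i _ => ?_
    rw [real_inner_comm x (b i)]; ring
  set a : Fin 3 → Fin 3 → ℝ := fun i j => ⟪A (b i), b j⟫ with ha
  have hsym : ∀ i j, a j i = a i j := by
    intro i j
    simp only [ha]
    rw [hA, real_inner_comm]
  have hAb : ∀ (i : Fin 3) (x : V), ⟪b i, A x⟫ = ⟪A (b i), x⟫ := by
    intro i x
    rw [real_inner_comm, hA, real_inner_comm]
  have hbij : ∀ i j : Fin 3, ⟪b i, b j⟫ = if i = j then 1 else 0 := by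
    intro i j
    exact orthonormal_iff_ite.mp b.orthonormal i j
  have ht : ⟪A w, w⟫ = 2 * a 0 0 := by
    rw [hwb, map_smul, real_inner_smul_left, real_inner_smul_right, ← mul_assoc,
      Real.mul_self_sqrt (by norm_num)]
  -- trace of A∘A
  have htrAA : LinearMap.trace ℝ V (A ∘ₗ A) = ∑ i, ∑ j, a i j ^ 2 := by
    rw [htr_b]
    refine Finset.sum_congr rfl fun i _ => ?_
    rw [LinearMap.comp_apply, hAb, real_inner_self_eq_norm_sq, hpar]
    refine Finset.sum_congr rfl fun j _ => ?_
    rw [real_inner_comm]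
  -- trace of A
  have htrsum : a 0 0 + a 1 1 + a 2 2 = 0 := by
    have h := (htr_b A).symm.trans htr
    rw [Fin.sum_univ_three] at h
    simpa only [hAb, real_inner_self_eq_norm_sq] using h
    -- fallback
  -- perp norm
  have hperp : ‖A w - (⟪A w, w⟫ / 2) • w‖ ^ 2 = 2 * (a 0 1 ^ 2 + a 0 2 ^ 2) := by
    have hrw : A w - (⟪A w, w⟫ / 2) • w
        = Real.sqrt 2 • (A (b 0) - a 0 0 • b 0) := by
      rw [ht, hwb, map_smul]
      have h2 : 2 * a 0 0 / 2 = a 0 0 := by ring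
      rw [h2, smul_sub, smul_comm (a 0 0) (Real.sqrt 2)]
    rw [hrw, norm_smul, mul_pow, Real.norm_eq_abs, sq_abs,
      Real.sq_sqrt (by norm_num : (2:ℝ) ≥ 0)]
    congr 1
    rw [hpar, Fin.sum_univ_three]
    simp only [inner_sub_right, real_inner_smul_right, hAb, hbij]
    norm_num
    rw [show ⟪A (b 1), b 0⟫ = a 0 1 from hsym 0 1,
      show ⟪A (b 2), b 0⟫ = a 0 2 from hsym 0 2]
    rw [if_neg (show ¬((2:Fin 3) = 0) from by decide)]
    ring
  rw [htrAA, hperp, ht, Fin.sum_univ_three, Fin.sum_univ_three, Fin.sum_univ_three,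
    Fin.sum_univ_three]
  have h10 := hsym 0 1
  have h20 := hsym 0 2
  have h21 := hsym 1 2
  have h0 : a 1 1 + a 2 2 = - a 0 0 := by linarith
  have hsq : (a 1 1 + a 2 2) ^ 2 = a 0 0 ^ 2 := by rw [h0]; ring
  have key : a 1 1 ^ 2 + a 2 2 ^ 2 ≥ a 0 0 ^ 2 / 2 := by
    nlinarith [sq_nonneg (a 1 1 - a 2 2), hsq]
  have h10' : a 1 0 ^ 2 = a 0 1 ^ 2 := by rw [h10]
  have h20' : a 2 0 ^ 2 = a 0 2 ^ 2 := by rw [h20]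
  have h21' : a 2 1 ^ 2 = a 1 2 ^ 2 := by rw [h21]
  nlinarith [key, sq_nonneg (a 1 2), h10', h20', h21']
end

section
/- Let V be a real inner product space of dimension 3, let A : V → V be a self-adjoint (symmetric) linear map with trace zero, and let w ∈ V satisfy ‖w‖² = 2. Then ‖A‖² − (1/2)·‖A w − (⟨A w, w⟩/2)·w‖² ≥ (3/8)·⟨A w, w⟩², where ‖A‖² := tr(A∘A) is the squared Frobenius norm. (This weakened form of LeBrun's Lemma is the pointwise input to the integral inequality ∫ W₊(ω,ω)(W₊(ω,ω) − s/3) dμ ≤ 0.) -/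
open scoped RealInnerProductSpace

/-- Weakened pointwise form of LeBrun's Lemma:
`‖A‖² − (1/2)‖A(w)^⊥‖² ≥ (3/8)⟨A w, w⟩²`. -/
theorem lebrun_lemma_weak_pointwise
    {V : Type*} [NormedAddCommGroup V] [InnerProductSpace ℝ V]
    [FiniteDimensional ℝ V] (hdim : Module.finrank ℝ V = 3)
    (A : V →ₗ[ℝ] V) (hA : ∀ x y : V, ⟪A x, y⟫ = ⟪x, A y⟫)
    (htr : LinearMap.trace ℝ V A = 0)
    (w : V) (hw : ‖w‖ ^ 2 = 2) :
    LinearMap.trace ℝ V (A ∘ₗ A) - (1 / 2) * ‖A w - (⟪A w, w⟫ / 2) • w‖ ^ 2 ≥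
      (3 / 8) * ⟪A w, w⟫ ^ 2 := by
  have hs2 : (0:ℝ) < Real.sqrt 2 := Real.sqrt_pos.mpr (by norm_num)
  have hnw : ‖w‖ = Real.sqrt 2 := by
    rw [← Real.sqrt_sq (norm_nonneg w), hw]
  -- orthonormal family on the singleton {0}
  have hcard : Module.finrank ℝ V = Fintype.card (Fin 3) := by simp [hdim]
  have hon : Orthonormal ℝ (Set.restrict {(0 : Fin 3)}
      (fun _ : Fin 3 => (Real.sqrt 2)⁻¹ • w)) := by
    constructor
    · intro i
      show ‖(Real.sqrt 2)⁻¹ • w‖ = 1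
      simp only [Set.restrict_apply, norm_smul, norm_inv, Real.norm_eq_abs,
        abs_of_pos hs2, hnw]
      field_simp
    · rintro ⟨i, hi⟩ ⟨j, hj⟩ hij
      exact absurd (Subtype.ext ((hi.trans hj.symm : i = j))) hij
  obtain ⟨b, hb⟩ := hon.exists_orthonormalBasis_extension_of_card_eq hcard
  have hb0 : b 0 = (Real.sqrt 2)⁻¹ • w := hb 0 rfl
  have hwb : w = Real.sqrt 2 • b 0 := by
    rw [hb0, smul_smul, mul_inv_cancel₀ (ne_of_gt hs2), one_smul]
  -- trace via the orthonormal basis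
  have htrace : ∀ T : V →ₗ[ℝ] V,
      LinearMap.trace ℝ V T = ∑ i, ⟪b i, T (b i)⟫ := by
    intro T
    rw [LinearMap.trace_eq_matrix_trace ℝ b.toBasis, Matrix.trace]
    simp [Matrix.diag, LinearMap.toMatrix_apply,
      OrthonormalBasis.coe_toBasis_repr_apply, OrthonormalBasis.repr_apply_apply]
  set a : Fin 3 → Fin 3 → ℝ := fun i j => ⟪b i, A (b j)⟫ with ha
  have hsym : ∀ i j, a i j = a j i := by
    intro i j
    simp only [ha]
    rw [← hA, real_inner_comm]
  -- trace zero
  have htr0 : a 0 0 + a 1 1 + a 2 2 = 0 := by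
    have := htr
    rw [htrace A, Fin.sum_univ_three] at this
    exact this
  -- Parseval for ‖A (b i)‖²
  have hnormsq : ∀ i, ⟪A (b i), A (b i)⟫ = ∑ j, a j i * a j i := by
    intro i
    rw [← b.sum_inner_mul_inner (A (b i)) (A (b i))]
    refine Finset.sum_congr rfl fun j _ => ?_
    have e1 : ⟪A (b i), b j⟫ = a j i := real_inner_comm _ _
    have e2 : ⟪b j, A (b i)⟫ = a j i := rfl
    rw [e1, e2]
  -- trace of A ∘ A
  have htrAA : LinearMap.trace ℝ V (A ∘ₗ A) = ∑ i, ∑ j, a j i * a j i := by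
    rw [htrace]
    refine Finset.sum_congr rfl fun i _ => ?_
    rw [LinearMap.comp_apply, ← hA, hnormsq]
  -- inner products with w
  have hAw : ⟪A w, w⟫ = 2 * a 0 0 := by
    rw [hwb, map_smul, real_inner_smul_left, real_inner_smul_right]
    have e : ⟪A (b 0), b 0⟫ = a 0 0 := real_inner_comm _ _
    rw [e]
    have : Real.sqrt 2 * (Real.sqrt 2 * a 0 0) = (Real.sqrt 2 * Real.sqrt 2) * a 0 0 := by ring
    rw [this, Real.mul_self_sqrt (by norm_num)]
  -- the perpendicular part
  have hperp : ‖A w - (⟪A w, w⟫ / 2) • w‖ ^ 2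
      = 2 * (∑ j, a j 0 * a j 0) - 2 * (a 0 0) ^ 2 := by
    rw [hAw]
    have h1 : A w - (2 * a 0 0 / 2) • w
        = Real.sqrt 2 • (A (b 0) - a 0 0 • b 0) := by
      rw [hwb, map_smul, smul_sub, smul_smul, smul_smul]
      congr 2
      ring
    rw [h1, norm_smul, mul_pow, Real.norm_eq_abs, sq_abs,
      Real.sq_sqrt (by norm_num : (0:ℝ) ≤ 2)]
    have h2 : ‖A (b 0) - a 0 0 • b 0‖ ^ 2
        = ⟪A (b 0) - a 0 0 • b 0, A (b 0) - a 0 0 • b 0⟫ := by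
      rw [real_inner_self_eq_norm_sq]
    rw [h2]
    have hb00 : ⟪b 0, b 0⟫ = 1 := real_inner_self_eq_norm_sq (b 0) ▸ by
      simp [b.orthonormal.1 0]
    rw [inner_sub_sub_self]
    rw [real_inner_smul_left, real_inner_smul_right, real_inner_smul_left,
      real_inner_smul_right, hb00, hnormsq]
    have e : ⟪A (b 0), b 0⟫ = a 0 0 := real_inner_comm _ _
    rw [e]
    ring
  rw [htrAA, hperp, hAw]
  simp only [Fin.sum_univ_three]
  have h01 := hsym 0 1
  have h02 := hsym 0 2
  have h12 := hsym 1 2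
  have h3 : a 1 1 + a 2 2 = -(a 0 0) := by linarith
  have h5 : (a 0 0)^2 ≤ 2*((a 1 1)^2 + (a 2 2)^2) := by
    have h4 : (a 0 0)^2 = (a 1 1 + a 2 2)^2 := by rw [h3]; ring
    nlinarith [sq_nonneg (a 1 1 - a 2 2), h4]
  nlinarith [sq_nonneg (a 1 1 - a 2 2), h3, sq_nonneg (a 1 2), sq_nonneg (a 2 1),
    sq_nonneg (a 0 1), sq_nonneg (a 0 2), sq_nonneg (a 1 0), sq_nonneg (a 2 0)]
end

section
/- Let (M, μ) be a measure space and let s, t, w, p : M → ℝ be measurable functions such that s², t², s·t, (t − s)², w and p are integrable. Assume (i) ∫ s·(t/2 − s/6) dμ = ∫ (8·w − 4·p) dμ, and (ii) w − p ≥ (3/8)·(t/2 − s/6)² pointwise (μ-almost everywhere). Then ∫ s²/24 dμ − ∫ w dμ ≥ (3/32)·∫ (t − s)² dμ ≥ 0. (Abstract form of Theorem 3: with s the scalar curvature, t = s* the star scalar curvature, w = |W₊|², p = |W₊(ω)^⊥|², this yields ∫ s²/24 dμ ≥ ∫ |W₊|² dμ for compact almost-Kähler four-manifolds with δW₊ =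 0.) -/
open MeasureTheory

/-- Abstract form of Theorem 3: if `∫ s(t/2 − s/6) = ∫ (8w − 4p)` and pointwise
`w − p ≥ (3/8)(t/2 − s/6)²`, then `∫ s²/24 − ∫ w ≥ (3/32) ∫ (t − s)² ≥ 0`. -/
theorem theorem3_abstract
    {M : Type*} [MeasurableSpace M] (μ : Measure M)
    (s t w p : M → ℝ)
    (hs : Measurable s) (ht : Measurable t) (hw : Measurable w) (hp : Measurable p)
    (hs2 : Integrable (fun x => s x ^ 2) μ)
    (ht2 : Integrable (fun x => t x ^ 2) μ)
    (hst : Integrable (fun x => s x * t x) μ)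
    (hts2 : Integrable (fun x => (t x - s x) ^ 2) μ)
    (hwi : Integrable w μ) (hpi : Integrable p μ)
    (h1 : ∫ x, s x * (t x / 2 - s x / 6) ∂μ = ∫ x, (8 * w x - 4 * p x) ∂μ)
    (h2 : ∀ᵐ x ∂μ, w x - p x ≥ (3 / 8) * (t x / 2 - s x / 6) ^ 2) :
    (∫ x, s x ^ 2 / 24 ∂μ) - (∫ x, w x ∂μ) ≥ (3 / 32) * ∫ x, (t x - s x) ^ 2 ∂μ ∧
      (3 / 32) * ∫ x, (t x - s x) ^ 2 ∂μ ≥ 0 := by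
  set A := ∫ x, s x ^ 2 ∂μ with hA
  set B := ∫ x, s x * t x ∂μ with hB
  set C := ∫ x, t x ^ 2 ∂μ with hC
  set W := ∫ x, w x ∂μ with hW
  set P := ∫ x, p x ∂μ with hP
  have hq2 : Integrable (fun x => (t x / 2 - s x / 6) ^ 2) μ := by
    have h : (fun x => (t x / 2 - s x / 6) ^ 2)
        = fun x => t x ^ 2 / 4 - (s x * t x) / 6 + s x ^ 2 / 36 := by
      funext x; ring
    rw [h]
    exact ((ht2.div_const 4).sub (hst.div_const 6)).add (hs2.div_const 36)
  -- value of ∫ q²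
  have i1 : Integrable (fun x => t x ^ 2 / 4 - (s x * t x) / 6) μ :=
    (ht2.div_const 4).sub (hst.div_const 6)
  have hQ : ∫ x, (t x / 2 - s x / 6) ^ 2 ∂μ = C / 4 - B / 6 + A / 36 := by
    have h : (fun x => (t x / 2 - s x / 6) ^ 2)
        = fun x => (t x ^ 2 / 4 - (s x * t x) / 6 + s x ^ 2 / 36) := by
      funext x; ring
    rw [h, integral_add i1 (hs2.div_const 36),
      integral_sub (ht2.div_const 4) (hst.div_const 6), integral_div, integral_div,
      integral_div]
  -- integrated version of h2
  have h2' : W - P ≥ (3 / 8) * (C / 4 - B / 6 + A / 36) := by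
    have hm : ∫ x, (3 / 8 : ℝ) * (t x / 2 - s x / 6) ^ 2 ∂μ ≤ ∫ x, (w x - p x) ∂μ :=
      integral_mono_ae (hq2.const_mul (3 / 8)) (hwi.sub hpi) h2
    rw [integral_const_mul, hQ, integral_sub hwi hpi] at hm
    exact hm
  -- compute both sides of h1
  have hL : ∫ x, s x * (t x / 2 - s x / 6) ∂μ = B / 2 - A / 6 := by
    have h : (fun x => s x * (t x / 2 - s x / 6))
        = fun x => (s x * t x) / 2 - s x ^ 2 / 6 := by
      funext x; ring
    rw [h, integral_sub (hst.div_const 2) (hs2.div_const 6), integral_div, integral_div]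
  have hR : ∫ x, (8 * w x - 4 * p x) ∂μ = 8 * W - 4 * P := by
    rw [integral_sub (hwi.const_mul 8) (hpi.const_mul 4), integral_const_mul,
      integral_const_mul]
  rw [hL, hR] at h1
  -- ∫ (t-s)² = C - 2B + A
  have hD : ∫ x, (t x - s x) ^ 2 ∂μ = C - 2 * B + A := by
    have h : (fun x => (t x - s x) ^ 2)
        = fun x => (t x ^ 2 - 2 * (s x * t x) + s x ^ 2) := by
      funext x; ring
    have i2 : Integrable (fun x => t x ^ 2 - 2 * (s x * t x)) μ :=
      ht2.sub (hst.const_mul 2)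
    rw [h, integral_add i2 hs2,
      integral_sub ht2 (hst.const_mul 2), integral_const_mul]
  have hS : ∫ x, s x ^ 2 / 24 ∂μ = A / 24 := by rw [integral_div]
  have hDpos : (0 : ℝ) ≤ ∫ x, (t x - s x) ^ 2 ∂μ :=
    integral_nonneg fun x => sq_nonneg _
  constructor
  · rw [hS, hD]
    rw [hD] at hDpos
    linarith
  · linarith
end

section
/- Let (M, μ) be a measure space and let s, t, w, p : M → ℝ be measurable functions such that s², t², s·t, (t − s)², w and p are integrable. Assume (i) ∫ s·(t/2 − s/6) dμ = ∫ (8·w − 4·p) dμ, (ii) w − p ≥ (3/8)·(t/2 − s/6)² pointwise (μ-almost everywhere), and (iii) ∫ s²/24 dμ = ∫ w dμ. Then t = s μ-almost everywhere. (Abstract form of the equality case of Theorem 3: equality ∫ s²/24 dμ = ∫ |W₊|² dμ forces s* ≡ s, i.e., the almost-Kähler structure is Kähler with constant scalar curvature.) -/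
open MeasureTheory

/-- Abstract form of the equality case of Theorem 3: under the hypotheses of Theorem 3,
equality `∫ s²/24 = ∫ w` forces `t = s` a.e. -/
theorem theorem3_equality_case_abstract
    {M : Type*} [MeasurableSpace M] (μ : Measure M)
    (s t w p : M → ℝ)
    (hs : Measurable s) (ht : Measurable t) (hw : Measurable w) (hp : Measurable p)
    (hs2 : Integrable (fun x => s x ^ 2) μ)
    (ht2 : Integrable (fun x => t x ^ 2) μ)
    (hst : Integrable (fun x => s x * t x) μ)
    (hts2 : Integrable (fun x => (t x - s x) ^ 2) μ)
    (hwi : Integrable w μ) (hpi : Integrable p μ)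
    (h1 : ∫ x, s x * (t x / 2 - s x / 6) ∂μ = ∫ x, (8 * w x - 4 * p x) ∂μ)
    (h2 : ∀ᵐ x ∂μ, w x - p x ≥ (3 / 8) * (t x / 2 - s x / 6) ^ 2)
    (h3 : ∫ x, s x ^ 2 / 24 ∂μ = ∫ x, w x ∂μ) :
    t =ᵐ[μ] s := by
  set A := ∫ x, s x ^ 2 ∂μ with hAdef
  set B := ∫ x, s x * t x ∂μ with hBdef
  set C := ∫ x, t x ^ 2 ∂μ with hCdef
  set D := ∫ x, (t x - s x) ^ 2 ∂μ with hDdef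
  set W := ∫ x, w x ∂μ with hWdef
  set P := ∫ x, p x ∂μ with hPdef
  have hq2 : Integrable (fun x => (t x / 2 - s x / 6) ^ 2) μ := by
    have h : Integrable
        (fun x => (1/4) * t x ^ 2 - (1/6) * (s x * t x) + (1/36) * s x ^ 2) μ :=
      ((ht2.const_mul _).sub (hst.const_mul _)).add (hs2.const_mul _)
    exact h.congr (Filter.Eventually.of_forall fun x => by ring)
  have e1 : ∫ x, s x * (t x / 2 - s x / 6) ∂μ = B / 2 - A / 6 := by
    have h : (fun x => s x * (t x / 2 - s x / 6))
        = fun x => (s x * t x) / 2 - s x ^ 2 / 6 := by funext x; ring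
    rw [h, integral_sub (hst.div_const 2) (hs2.div_const 6), integral_div, integral_div]
  have e2 : ∫ x, (8 * w x - 4 * p x) ∂μ = 8 * W - 4 * P := by
    rw [integral_sub (hwi.const_mul 8) (hpi.const_mul 4), integral_const_mul,
      integral_const_mul]
  have e3 : ∫ x, s x ^ 2 / 24 ∂μ = A / 24 := by rw [integral_div]
  have e4 : ∫ x, (t x / 2 - s x / 6) ^ 2 ∂μ = C / 4 - B / 6 + A / 36 := by
    have h : (fun x => (t x / 2 - s x / 6) ^ 2)
        = fun x => (t x ^ 2 / 4 - (s x * t x) / 6) + s x ^ 2 / 36 := by funext x; ring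
    have i1 : Integrable (fun x => t x ^ 2 / 4 - s x * t x / 6) μ :=
      (ht2.div_const 4).sub (hst.div_const 6)
    rw [h, integral_add i1 (hs2.div_const 36),
      integral_sub (ht2.div_const 4) (hst.div_const 6), integral_div, integral_div,
      integral_div]
  have e5 : D = C - 2 * B + A := by
    have h : (fun x => (t x - s x) ^ 2)
        = fun x => (t x ^ 2 - 2 * (s x * t x)) + s x ^ 2 := by funext x; ring
    have i1 : Integrable (fun x => t x ^ 2 - 2 * (s x * t x)) μ :=
      ht2.sub (hst.const_mul 2)
    rw [hDdef, h, integral_add i1 hs2,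
      integral_sub ht2 (hst.const_mul 2), integral_const_mul]
  have hineq : (3/8) * (C / 4 - B / 6 + A / 36) ≤ W - P := by
    have h := integral_mono_ae (hq2.const_mul (3/8)) (hwi.sub hpi)
      (h2.mono fun x hx => hx)
    simp only [Pi.sub_apply] at h
    rwa [integral_const_mul, e4, integral_sub hwi hpi] at h
  rw [e1, e2] at h1
  rw [e3] at h3
  have hD0 : 0 ≤ D := integral_nonneg fun x => sq_nonneg _
  have hDle : D ≤ 0 := by rw [e5]; linarith
  have hD : D = 0 := le_antisymm hDle hD0
  have hzero : (fun x => (t x - s x) ^ 2) =ᵐ[μ] 0 :=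
    (integral_eq_zero_iff_of_nonneg (fun x => sq_nonneg _) hts2).mp hD
  filter_upwards [hzero] with x hx
  have : (t x - s x) ^ 2 = 0 := hx
  have := pow_eq_zero_iff (n := 2) (by norm_num) |>.mp this
  linarith [sub_eq_zero.mp this]
end
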